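/- Let Λ_n be a convex n-gon inscribed in a circle of radius R with half central angles θ_1,…,θ_n ∈ (0,π/2) summing to π, perimeter L_n = 2R ∑ sin θ_i and area A_n = R² ∑ sin θ_i cos θ_i, and let d_n = n tan(π/n). Then L_n² − 4 d_n A_n ≥ 0, with equality if and only if θ_1 = ⋯ = θ_n = π/n. -/

import Mathlib

set_option maxHeartbeats 4000000

open Real


lemma T2 {x : ℝ} (hx : 0 ≤ x) : x - x^3/6 ≤ Real.sin x := by
  have hmono : Monotone (fun y : ℝ => Real.sin y - (y - y^3/6)) := by
    apply monotone_of_hasDerivAt_nonneg (f' := fun y => Real.cos y - (1 - y^2/2))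
    · intro y
      exact (Real.hasDerivAt_sin y).sub
        (((hasDerivAt_id y).sub ((hasDerivAt_pow 3 y).div_const 6)).congr_deriv (by ring))
    · intro y
      have := Real.one_sub_sq_div_two_le_cos (x := y)
      simp only [Pi.zero_apply]
      linarith
  have h := hmono hx
  simp only [Real.sin_zero] at h
  linarith [h]

lemma T4 (x : ℝ) : Real.cos x ≤ 1 - x^2/2 + x^4/24 := by
  have main : ∀ y : ℝ, 0 ≤ y → Real.cos y ≤ 1 - y^2/2 + y^4/24 := by
    intro y hy
    have hmono : MonotoneOn (fun z : ℝ => (1 - z^2/2 + z^4/24) - Real.cos z) (Set.Ici 0) := by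
      apply monotoneOn_of_hasDerivWithinAt_nonneg (convex_Ici 0)
        (f' := fun z => Real.sin z - (z - z^3/6))
      · exact (Continuous.continuousOn (by continuity))
      · intro z hz
        have h1 : HasDerivAt (fun z : ℝ => 1 - z^2/2 + z^4/24) (-(z) + z^3/6) z := by
          have := (((hasDerivAt_pow 2 z).div_const 2).const_sub 1).add ((hasDerivAt_pow 4 z).div_const 24)
          exact this.congr_deriv (by norm_num; ring)
        have h2 := h1.sub (Real.hasDerivAt_cos z)
        have h3 : HasDerivAt (fun z : ℝ => (1 - z^2/2 + z^4/24) - Real.cos z)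
            (Real.sin z - (z - z^3/6)) z := by
          exact h2.congr_deriv (by ring)
        exact h3.hasDerivWithinAt
      · intro z hz
        rw [interior_Ici] at hz
        linarith [T2 (le_of_lt hz)]
    have h := hmono (Set.self_mem_Ici) (Set.mem_Ici.mpr hy) hy
    simp only [Real.cos_zero] at h
    linarith
  rcases le_or_gt 0 x with h | h
  · exact main x h
  · have := main (-x) (by linarith)
    rw [Real.cos_neg] at this
    nlinarith [this]

lemma T5 {x : ℝ} (hx : 0 ≤ x) : Real.sin x ≤ x - x^3/6 + x^5/120 := by
  have hmono : Monotone (fun y : ℝ => (y - y^3/6 + y^5/120) - Real.sin y) := by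
    apply monotone_of_hasDerivAt_nonneg (f' := fun y => (1 - y^2/2 + y^4/24) - Real.cos y)
    · intro y
      have h1 : HasDerivAt (fun y : ℝ => y - y^3/6 + y^5/120) (1 - y^2/2 + y^4/24) y := by
        have := ((hasDerivAt_id y).sub ((hasDerivAt_pow 3 y).div_const 6)).add ((hasDerivAt_pow 5 y).div_const 120)
        exact this.congr_deriv (by norm_num; ring)
      exact h1.sub (Real.hasDerivAt_sin y)
    · intro y
      simp only [Pi.zero_apply]
      linarith [T4 y]
  have h := hmono hx
  simp only [Real.sin_zero] at h
  linarith



lemma sin_add_cos_ge_one {s : ℝ} (h0 : 0 ≤ Real.sin s) (h1 : 0 ≤ Real.cos s) :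
    1 ≤ Real.sin s + Real.cos s := by
  nlinarith [Real.sin_sq_add_cos_sq s, mul_nonneg h0 h1, sq_nonneg (Real.sin s + Real.cos s - 1)]

lemma sqrt6_lb {m : ℝ} (h0 : 0 < m) (h6 : 6 < m^2) : (2.449:ℝ) ≤ m := by
  nlinarith [sq_nonneg (m - 2.449)]

lemma c0_pos {x : ℝ} (h1 : 0 ≤ x) (h2 : x ≤ 0.6926) : 0 < 1 - x^2/2 := by
  nlinarith [mul_nonneg (by linarith : (0:ℝ) ≤ 0.6926 - x) h1]

lemma cube_pos_aux {m : ℝ} (h0 : 0 < m) (h : m^2 ≤ 15) : (0:ℝ) ≤ 3*m^3 - m^5/5 := by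
  nlinarith [mul_nonneg (mul_nonneg h0.le h0.le) (mul_nonneg h0.le (by linarith : (0:ℝ) ≤ 15 - m^2))]

lemma polyB4 {m : ℝ} (h0 : 0 < m) (h2 : m < 1.5708) :
    0.855*(6-m^2) - (4 - 1.5*m^2 + m^4/8)*m > 0 := by
  nlinarith [mul_pos h0 h0, mul_pos (mul_pos h0 h0) h0, sq_nonneg (m-1.3),
    mul_nonneg (mul_nonneg (by linarith : (0:ℝ) ≤ 1.5708 - m) h0.le) h0.le,
    mul_nonneg (mul_nonneg (mul_nonneg (by linarith : (0:ℝ) ≤ 1.5708 - m) h0.le) h0.le) h0.le]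

lemma polyB2 {m : ℝ} (h0 : (1.5707:ℝ) < m) (h6 : m^2 ≤ 6) :
    (6-m^2) + (3*m - m^3/5 - 6 + m^2)*(1-(3.141593-m)^2/2) - m > 0 := by
  have hm' : m ≤ 2.4495 := by linarith [sq_nonneg (m - 2.4495)]
  nlinarith [sq_nonneg (m-2.134), mul_nonneg (mul_nonneg (by linarith : (0:ℝ) ≤ m-1.5707) (by linarith : (0:ℝ) ≤ 2.4495-m)) (sq_nonneg (m-2.134)), mul_nonneg (by linarith : (0:ℝ) ≤ m-1.5707) (by linarith : (0:ℝ) ≤ 2.4495-m), mul_nonneg (mul_nonneg (by linarith : (0:ℝ) ≤ m-1.5707) (by linarith : (0:ℝ) ≤ m-1.5707)) (by linarith : (0:ℝ) ≤ 2.4495-m), mul_nonneg (mul_nonneg (by linarith : (0:ℝ) ≤ 2.4495-m) (by linarith : (0:ℝ) ≤ 2.4495-m)) (by linarith : (0:ℝ) ≤ m-1.5707)]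

lemma polyB3 {m : ℝ} (h0 : (2.449:ℝ) ≤ m) (hmc : m < 3.141593) :
    (1-(3.141593-m)^2/2)*(3*m^3 - m^5/5) - (3.141593-m)*m^2*(m^2-6) - m^3 > 0 := by
  nlinarith [sq_nonneg (m-3.1416), mul_nonneg (mul_nonneg (by linarith : (0:ℝ) ≤ m-2.449) (by linarith : (0:ℝ) ≤ 3.141593-m)) (sq_nonneg (m-2.8)), mul_nonneg (by linarith : (0:ℝ) ≤ m-2.449) (by linarith : (0:ℝ) ≤ 3.141593-m), mul_nonneg (mul_nonneg (by linarith : (0:ℝ) ≤ m-2.449) (by linarith : (0:ℝ) ≤ m-2.449)) (by linarith : (0:ℝ) ≤ 3.141593-m), mul_nonneg (mul_nonneg (by linarith : (0:ℝ) ≤ 3.141593-m) (by linarith : (0:ℝ) ≤ 3.141593-m)) (by linarith : (0:ℝ) ≤ m-2.449)]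

lemma keyA {s y : ℝ} (hs0 : 0 < s) (hs : s ≤ 2*π/3) (hy0 : 0 < y) (hys : y < s) :
    0 < 24*sin s*(1 - cos y) + 24*cos s*(sin y - y) - 6*sin s*y^2 := by
  have hπ : (3.141592 : ℝ) < π := pi_gt_d6
  have hπ' : π < 3.141593 := pi_lt_d6
  have hsπ : s < π := by linarith
  have hsin : 0 < sin s := sin_pos_of_pos_of_lt_pi hs0 hsπ
  have hs6 : s^2 < 6 := by nlinarith
  have hy6 : y^2 < 6 := by nlinarith
  have hcy : y^2/2 - y^4/24 ≤ 1 - cos y := by linarith [T4 y]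
  have hsy := T2 hy0.le
  have hsy' := sin_le hy0.le
  have e1 : 24*sin s*(y^2/2 - y^4/24) ≤ 24*sin s*(1 - cos y) :=
    mul_le_mul_of_nonneg_left hcy (by positivity)
  rcases le_or_gt 0 (cos s) with hcs | hcs
  · have e2 : 24*cos s*(-(y^3)/6) ≤ 24*cos s*(sin y - y) :=
      mul_le_mul_of_nonneg_left (by linarith) (by linarith)
    have e4 : 6*sin s - sin s*s^2 - 4*cos s*s ≥ 2*s := by
      have t2 := T2 hs0.le
      have t4 := T4 s
      nlinarith [mul_nonneg (sub_nonneg.mpr t2) (by nlinarith : (0:ℝ) ≤ 6 - s^2),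
        mul_nonneg (sub_nonneg.mpr (le_of_lt hs0)) (sub_nonneg.mpr t4)]
    have e3 : 6*sin s - sin s*y^2 - 4*cos s*y ≥ 2*s := by
      nlinarith [mul_nonneg hsin.le (by nlinarith : (0:ℝ) ≤ s^2 - y^2),
        mul_nonneg hcs (by linarith : (0:ℝ) ≤ s - y)]
    have e5 := mul_le_mul_of_nonneg_left e3.le (sq_nonneg y)
    have e6 : 0 < y^2*(2*s) := by positivity
    nlinarith [e1, e2, e5, e6]
  · have e2 : 0 ≤ 24*cos s*(sin y - y) := by nlinarith
    have e7 : 0 < sin s*y^2*(6 - y^2) := by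
      apply mul_pos (by positivity)
      linarith
    linarith [e1, e2, e7]

lemma keyB {s m : ℝ} (hs0 : 0 < s) (hs : s ≤ 2*π/3) (hm0 : 0 < m) (hm : m < π - s) :
    0 < 24*sin s*(1 - cos m) + 24*cos s*(m - sin m) - 6*sin s*m^2 - (1+cos s)*m^3 := by
  have hπ : (3.141592 : ℝ) < π := pi_gt_d6
  have hπ' : π < 3.141593 := pi_lt_d6
  have hsπ : s < π := by linarith
  have hsin : 0 < sin s := sin_pos_of_pos_of_lt_pi hs0 hsπ
  have hmπ : m < π := by linarith
  have hcm := T4 m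
  have hsm := T2 hm0.le
  have hsm5 := T5 hm0.le
  have hsm' := sin_le hm0.le
  have e1 : 24*sin s*(m^2/2 - m^4/24) ≤ 24*sin s*(1 - cos m) :=
    mul_le_mul_of_nonneg_left (by linarith) (by positivity)
  have hcc : cos (π - m) ≤ cos s :=
    Real.cos_le_cos_of_nonneg_of_le_pi hs0.le (by linarith) (by linarith)
  rw [Real.cos_pi_sub] at hcc
  rcases le_or_gt (cos s) 0 with hcs | hcs
  · -- B4 : s ≥ π/2, m < π - s ≤ π/2
    have hs2 : π/2 ≤ s := by
      by_contra h
      push_neg at h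
      exact absurd (cos_pos_of_mem_Ioo ⟨by linarith, h⟩) (not_lt.mpr hcs)
    have hm2 : m < π/2 := by linarith
    have e2 : 4*cos s*m^3 ≤ 24*cos s*(m - sin m) := by
      have h1 : m - sin m ≤ m^3/6 := by linarith
      nlinarith [mul_nonneg (neg_nonneg.mpr hcs) (by linarith : (0:ℝ) ≤ m^3/6 - (m - sin m))]
    have hss : sin s ≥ 0.855 := by
      have h0 : sin s = sin (π - s) := (Real.sin_pi_sub s).symm
      rw [h0]
      have h1 : π/3 ≤ π - s := by linarith
      have h2 : π - s ≤ π/2 := by linarith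
      have h3 := T2 (by linarith : (0:ℝ) ≤ π - s)
      nlinarith [sq_nonneg (π - s - 1.35)]
    have k1 : (3*cos s - 1)*m ≥ -((4 - 1.5*m^2 + m^4/8)*m) := by
      have h1 : 0 ≤ (cos s + cos m)*m := mul_nonneg (by linarith) hm0.le
      have h2 : 0 ≤ ((1 - m^2/2 + m^4/24) - cos m)*m :=
        mul_nonneg (by linarith) hm0.le
      nlinarith [h1, h2]
    have hm15 : m < 1.5708 := by linarith
    have hmsq : m^2 < 2.47 := by nlinarith [mul_lt_mul'' hm15 hm15 hm0.le hm0.le]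
    have k2 : sin s*(6-m^2) ≥ 0.855*(6-m^2) := by
      nlinarith [mul_nonneg (by linarith : (0:ℝ) ≤ sin s - 0.855) (by linarith : (0:ℝ) ≤ 6 - m^2)]
    have k3 : 0.855*(6-m^2) - (4 - 1.5*m^2 + m^4/8)*m > 0 := polyB4 hm0 hm15
    have key : sin s*(6-m^2) + (3*cos s - 1)*m > 0 := by linarith
    linarith [e1, e2, mul_pos (mul_pos hm0 hm0) key]
  · -- cos s > 0 hence s < π/2
    have hs2 : s < π/2 := by
      by_contra h
      push_neg at h
      have := Real.cos_nonpos_of_pi_div_two_le_of_le h (by linarith)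
      linarith
    have e2 : cos s*(4*m^3 - m^5/5) ≤ 24*cos s*(m - sin m) := by
      have h1 : m^3/6 - m^5/120 ≤ m - sin m := by linarith
      have := mul_le_mul_of_nonneg_left h1 (by linarith : (0:ℝ) ≤ 24*cos s)
      nlinarith [this]
    have hQ : 24*sin s*(1 - cos m) + 24*cos s*(m - sin m) - 6*sin s*m^2 - (1+cos s)*m^3
        ≥ sin s*m^2*(6-m^2) + cos s*(3*m^3 - m^5/5) - m^3 := by linarith
    have hc0 : 1 - (π - m)^2/2 ≤ cos s := by
      have h1 := Real.one_sub_sq_div_two_le_cos (x := s)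
      nlinarith [sq_nonneg (π - m - s), sq_nonneg (π - m + s)]
    rcases le_or_gt m (π/2) with hm2 | hm2
    · -- B1
      have hm6 : (0:ℝ) < 6 - m^2 := by nlinarith
      have h25 : 0 ≤ cos s*m^3*(1/2 - m^2/5) :=
        mul_nonneg (mul_nonneg hcs.le (by positivity)) (by nlinarith)
      have key : sin s*(6-m^2) + 2.5*cos s*m - m > 0 := by
        rcases le_or_gt 0.4 (cos s) with hc4 | hc4
        · have h1 : 0 < sin s*(6-m^2) := mul_pos hsin hm6
          have h2 : 0 ≤ m*(2.5*cos s - 1) := mul_nonneg hm0.le (by linarith)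
          nlinarith [h1, h2]
        · have hs12 : 1.2 ≤ s^2 := by
            have := Real.one_sub_sq_div_two_le_cos (x := s)
            linarith
          have hsins : s - s^3/6 ≤ sin s := T2 hs0.le
          have hslb : sin s ≥ 0.64 := by
            nlinarith [sq_nonneg (s - 1.3), mul_pos hs0 hs0, sq_nonneg (s^2 - 1.8)]
          have h1 : sin s*(6-m^2) ≥ 0.64*(6-m^2) :=
            mul_le_mul_of_nonneg_right (by linarith) hm6.le
          have h2 : 0 ≤ 2.5*cos s*m := by positivity
          nlinarith [h1, h2]
      linarith [hQ, h25, mul_pos (mul_pos hm0 hm0) key]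
    · rcases le_or_gt (m^2) 6 with hm6 | hm6
      · -- B2
        have hba : (0:ℝ) ≤ 3*m - m^3/5 - 6 + m^2 := by nlinarith
        have hsc1 : 1 ≤ sin s + cos s := sin_add_cos_ge_one hsin.le hcs.le
        have hconst : 1 - (3.141593-m)^2/2 ≤ 1 - (π-m)^2/2 := by
          linarith [mul_nonneg (by linarith : (0:ℝ) ≤ 3.141593 - π) (by linarith : (0:ℝ) ≤ 3.141593 + π - 2*m)]
        have key : (6-m^2) + (3*m - m^3/5 - 6 + m^2)*(1-(3.141593-m)^2/2) - m > 0 :=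
          polyB2 (by linarith) hm6
        have u1 : (6-m^2)*1 ≤ (6-m^2)*(sin s + cos s) :=
          mul_le_mul_of_nonneg_left hsc1 (by linarith)
        have u2 : (3*m - m^3/5 - 6 + m^2)*(1-(3.141593-m)^2/2) ≤ (3*m - m^3/5 - 6 + m^2)*cos s :=
          mul_le_mul_of_nonneg_left (le_trans hconst hc0) hba
        have decomp : sin s*m^2*(6-m^2) + cos s*(3*m^3 - m^5/5) - m^3 ≥
            m^2*((6-m^2) + (3*m - m^3/5 - 6 + m^2)*(1-(3.141593-m)^2/2) - m) := by
          have t1 : sin s*m^2*(6-m^2) + cos s*(3*m^3 - m^5/5) - m^3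
              = m^2*((6-m^2)*(sin s + cos s) + (3*m - m^3/5 - 6 + m^2)*cos s - m) := by ring
          rw [t1]
          have h7 : (6-m^2) + (3*m - m^3/5 - 6 + m^2)*(1-(3.141593-m)^2/2) - m
              ≤ (6-m^2)*(sin s + cos s) + (3*m - m^3/5 - 6 + m^2)*cos s - m := by linarith
          exact mul_le_mul_of_nonneg_left h7 (sq_nonneg m)
        linarith [hQ, decomp, mul_pos (mul_pos hm0 hm0) key]
      · -- B3 : m^2 > 6
        have hsins : sin s ≤ s := sin_le hs0.le
        have h0 : (2.449:ℝ) ≤ m := sqrt6_lb hm0 hm6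
        have hmc : m < 3.141593 := by linarith
        have hx1 : (0:ℝ) ≤ π - m := by linarith
        have hx2 : π - m ≤ 0.6926 := by linarith
        have hc0' : (0:ℝ) < 1 - (π - m)^2/2 := c0_pos hx1 hx2
        have h35 : (0:ℝ) ≤ 3*m^3 - m^5/5 := cube_pos_aux hm0 (by nlinarith [sq_nonneg m])
        have hconst : 1 - (3.141593-m)^2/2 ≤ 1 - (π-m)^2/2 := by
          linarith [mul_nonneg (by linarith : (0:ℝ) ≤ 3.141593 - π) (by linarith : (0:ℝ) ≤ 3.141593 + π - 2*m)]
        have key : (1-(3.141593-m)^2/2)*(3*m^3 - m^5/5) - (3.141593-m)*m^2*(m^2-6) - m^3 > 0 :=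
          polyB3 h0 hmc
        have h2 : (0:ℝ) ≤ m^2*(m^2-6) := mul_nonneg (sq_nonneg m) (by linarith)
        have hππ : (π-m)*m^2*(m^2-6) ≤ (3.141593-m)*m^2*(m^2-6) := by
          linarith [mul_nonneg (by linarith : (0:ℝ) ≤ 3.141593 - π) h2]
        have u1 : sin s*m^2*(6-m^2) ≥ (π-m)*m^2*(6-m^2) := by
          have h1 : sin s ≤ π - m := by linarith
          linarith [mul_nonneg (sub_nonneg.mpr h1) h2]
        have u2 : cos s*(3*m^3 - m^5/5) ≥ (1-(3.141593-m)^2/2)*(3*m^3 - m^5/5) :=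
          mul_le_mul_of_nonneg_right (le_trans hconst hc0) h35
        linarith [hQ, u1, u2, key, hππ]

lemma perterm {t θ : ℝ} (ht0 : 0 < t) (ht : t ≤ π/3) (h0 : 0 < θ) (h2 : θ < π/2) :
    sin θ * cos θ + cos (2*t)*(t-θ) + sin t*cos t*(t-θ)^2 + (cos t)^2/3*(max 0 (θ-t))^3
      ≤ sin t * cos t ∧
    (θ ≠ t → sin θ * cos θ + cos (2*t)*(t-θ) + sin t*cos t*(t-θ)^2
      + (cos t)^2/3*(max 0 (θ-t))^3 < sin t * cos t) := by
  have hstct : sin t * cos t = sin (2*t) / 2 := by rw [sin_two_mul]; ring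
  have hsc : sin θ * cos θ = sin (2*θ) / 2 := by rw [sin_two_mul]; ring
  have hcsq : (cos t)^2 = (1 + cos (2*t))/2 := by
    have := cos_sq t
    rw [this]; ring
  rcases lt_trichotomy θ t with hlt | heq | hgt
  · -- θ < t : use keyA with s = 2t, y = 2t - 2θ
    have hmax : max 0 (θ - t) = 0 := max_eq_left (by linarith)
    have hA := keyA (s := 2*t) (y := 2*t - 2*θ) (by linarith) (by linarith)
      (by linarith) (by linarith)
    have hexp : sin (2*θ) = sin (2*t) * cos (2*t - 2*θ) - cos (2*t) * sin (2*t - 2*θ) := by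
      have h' := sin_sub (2*t) (2*t - 2*θ)
      have h'' : 2*t - (2*t - 2*θ) = 2*θ := by ring
      rw [h''] at h'
      exact h'
    have hkey : sin θ * cos θ + cos (2*t)*(t-θ) + sin t*cos t*(t-θ)^2
        + (cos t)^2/3*(max 0 (θ-t))^3 < sin t * cos t := by
      rw [hmax, hsc, hstct, hexp]
      nlinarith [hA]
    exact ⟨hkey.le, fun _ => hkey⟩
  · subst heq
    constructor
    · simp
    · intro h; exact absurd rfl h
  · -- θ > t : use keyB with s = 2t, m = 2θ - 2t
    have hmax : max 0 (θ - t) = θ - t := max_eq_right (by linarith)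
    have hB := keyB (s := 2*t) (m := 2*θ - 2*t) (by linarith) (by linarith)
      (by linarith) (by linarith)
    have hexp : sin (2*θ) = sin (2*t) * cos (2*θ - 2*t) + cos (2*t) * sin (2*θ - 2*t) := by
      have h' := sin_add (2*t) (2*θ - 2*t)
      have h'' : 2*t + (2*θ - 2*t) = 2*θ := by ring
      rw [h''] at h'
      exact h'
    have hkey : sin θ * cos θ + cos (2*t)*(t-θ) + sin t*cos t*(t-θ)^2
        + (cos t)^2/3*(max 0 (θ-t))^3 < sin t * cos t := by
      rw [hmax, hsc, hstct, hexp, hcsq]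
      nlinarith [hB]
    exact ⟨hkey.le, fun _ => hkey⟩

lemma sinlb {t θ : ℝ} (ht0 : 0 < t) (ht2 : t < π/2) (h0 : 0 < θ) (h2 : θ < π/2) :
    sin t - cos t*(t-θ) - sin t/2*(t-θ)^2 - cos t/6*(max 0 (θ-t))^3 ≤ sin θ := by
  have hst : 0 ≤ sin t := sin_nonneg_of_nonneg_of_le_pi ht0.le (by linarith [pi_pos])
  have hct : 0 < cos t := cos_pos_of_mem_Ioo ⟨by linarith [pi_pos], ht2⟩
  have hexp : sin θ = sin t * cos (t-θ) - cos t * sin (t-θ) := by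
    have h' := sin_sub t (t-θ)
    have h'' : t - (t-θ) = θ := by ring
    rw [h''] at h'
    exact h'
  have hcos : 1 - (t-θ)^2/2 ≤ cos (t-θ) := one_sub_sq_div_two_le_cos
  have hs1 : sin t * (1 - (t-θ)^2/2) ≤ sin t * cos (t-θ) :=
    mul_le_mul_of_nonneg_left hcos hst
  have hsinδ : sin (t-θ) ≤ (t-θ) + (max 0 (θ-t))^3/6 := by
    rcases le_or_gt θ t with h | h
    · have hmax : max 0 (θ - t) = 0 := max_eq_left (by linarith)
      rw [hmax]
      have := sin_le (by linarith : 0 ≤ t - θ)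
      simpa using this
    · have hmax : max 0 (θ - t) = θ - t := max_eq_right (by linarith)
      rw [hmax]
      have hT := T2 (by linarith : (0:ℝ) ≤ θ - t)
      have : sin (t - θ) = - sin (θ - t) := by
        rw [← sin_neg]; ring_nf
      rw [this]
      linarith
  have hs2 : cos t * sin (t-θ) ≤ cos t * ((t-θ) + (max 0 (θ-t))^3/6) :=
    mul_le_mul_of_nonneg_left hsinδ hct.le
  rw [hexp]
  nlinarith [hs1, hs2]

open Real in
theorem stmt19 (n : ℕ) (hn : 3 ≤ n) (R : ℝ) (hR : 0 < R)
    (θ : Fin n → ℝ) (hθ : ∀ i, θ i ∈ Set.Ioo (0:ℝ) (π / 2))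
    (hsum : ∑ i, θ i = π)
    (L A d : ℝ)
    (hL : L = 2 * R * ∑ i, sin (θ i))
    (hA : A = R ^ 2 * ∑ i, sin (θ i) * cos (θ i))
    (hd : d = (n : ℝ) * tan (π / n)) :
    0 ≤ L ^ 2 - 4 * d * A
    ∧ (L ^ 2 - 4 * d * A = 0 ↔ ∀ i, θ i = π / n) := by
  have hπ := pi_pos
  have hn0 : (0:ℝ) < n := by
    have : (3:ℝ) ≤ n := by exact_mod_cast hn
    linarith
  set t : ℝ := π / n with htdef
  have ht0 : 0 < t := div_pos hπ hn0
  have htn : (n:ℝ) * t = π := by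
    rw [htdef]; field_simp
  have ht3 : t ≤ π/3 := by
    rw [htdef]
    apply div_le_div_of_nonneg_left hπ.le (by norm_num)
    exact_mod_cast hn
  have ht2 : t < π/2 := by linarith
  have hst : 0 < sin t := sin_pos_of_pos_of_lt_pi ht0 (by linarith)
  have hct : 0 < cos t := cos_pos_of_mem_Ioo ⟨by linarith, ht2⟩
  have htan : tan t = sin t / cos t := tan_eq_sin_div_cos t
  have htanpos : 0 < tan t := by rw [htan]; positivity
  -- sums
  set S := ∑ i, sin (θ i) with hSdef
  set C2 := ∑ i, sin (θ i) * cos (θ i) with hC2def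
  set D := ∑ i, (t - θ i)^2 with hDdef
  set N := ∑ i, (max 0 (θ i - t))^3 with hNdef
  have hδsum : ∑ i, (t - θ i) = 0 := by
    rw [Finset.sum_sub_distrib, hsum, Finset.sum_const, Finset.card_univ, Fintype.card_fin,
      nsmul_eq_mul]
    rw [htn]; ring
  have hD : 0 ≤ D := Finset.sum_nonneg fun i _ => sq_nonneg _
  have hN : 0 ≤ N := Finset.sum_nonneg fun i _ => pow_nonneg (le_max_left _ _) 3
  -- upper bound on C2 via per-term function f
  set f : Fin n → ℝ := fun i => sin t * cos t - (sin (θ i) * cos (θ i) + cos (2*t)*(t-θ i)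
    + sin t*cos t*(t-θ i)^2 + (cos t)^2/3*(max 0 (θ i - t))^3) with hfdef
  have hf : ∀ i, 0 ≤ f i := fun i =>
    sub_nonneg.mpr (perterm ht0 ht3 (hθ i).1 (hθ i).2).1
  have hfsum : ∑ i, f i = (n:ℝ) * (sin t * cos t) - C2 - sin t*cos t*D - (cos t)^2/3*N := by
    rw [hfdef]
    simp only [Finset.sum_sub_distrib, Finset.sum_add_distrib, Finset.sum_const,
      Finset.card_univ, Fintype.card_fin, nsmul_eq_mul, ← Finset.mul_sum, hδsum]
    rw [hC2def, hDdef, hNdef]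
    ring
  have hC2ub : C2 ≤ (n:ℝ) * (sin t * cos t) - sin t*cos t*D - (cos t)^2/3*N := by
    have h0 : 0 ≤ ∑ i, f i := Finset.sum_nonneg fun i _ => hf i
    linarith [hfsum ▸ h0]
  -- lower bound on S
  have hSlb : (n:ℝ) * sin t - sin t/2*D - cos t/6*N ≤ S := by
    have h1 : ∀ i ∈ Finset.univ, sin t - cos t*(t-θ i) - sin t/2*(t-θ i)^2
        - cos t/6*(max 0 (θ i - t))^3 ≤ sin (θ i) :=
      fun i _ => sinlb ht0 ht2 (hθ i).1 (hθ i).2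
    have h2 := Finset.sum_le_sum h1
    simp only [Finset.sum_sub_distrib, Finset.sum_const, Finset.card_univ, Fintype.card_fin,
      nsmul_eq_mul, ← Finset.mul_sum, hδsum] at h2
    rw [← hSdef, ← hDdef, ← hNdef] at h2
    linarith [h2]
  have hS0 : 0 ≤ S :=
    Finset.sum_nonneg fun i _ => sin_nonneg_of_nonneg_of_le_pi (hθ i).1.le
      (by linarith [(hθ i).2.le])
  -- square bound
  set K := (n:ℝ) * sin t with hKdef
  set Bq := sin t/2*D + cos t/6*N with hBqdef
  have hK0 : 0 ≤ K := by positivity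
  have hBq0 : 0 ≤ Bq := by
    apply add_nonneg
    · exact mul_nonneg (by positivity) hD
    · exact mul_nonneg (by positivity) hN
  have hSq : K^2 - 2*K*Bq ≤ S^2 := by
    rcases le_or_gt Bq K with h | h
    · have h1 : K - Bq ≤ S := by rw [hKdef, hBqdef]; linarith [hSlb]
      have h2 : (K - Bq)^2 ≤ S^2 := pow_le_pow_left₀ (by linarith) h1 2
      nlinarith [sq_nonneg Bq]
    · nlinarith [sq_nonneg S, mul_nonneg hK0 (by linarith : (0:ℝ) ≤ 2*Bq - K)]
  -- RHS identity
  have hRHS : (n:ℝ) * tan t * ((n:ℝ) * (sin t * cos t) - sin t*cos t*D - (cos t)^2/3*N)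
      = K^2 - 2*K*Bq := by
    rw [htan, hKdef, hBqdef]
    field_simp
    ring
  have hfinal : (n:ℝ) * tan t * C2 ≤ S^2 := by
    have h1 := mul_le_mul_of_nonneg_left hC2ub (by positivity : (0:ℝ) ≤ (n:ℝ) * tan t)
    rw [hRHS] at h1
    linarith [hSq]
  have hfactor : L ^ 2 - 4 * d * A = 4*R^2*(S^2 - (n:ℝ) * tan t * C2) := by
    rw [hL, hA, hd, hSdef, hC2def, htdef]
    ring
  have hstrict : (∃ j, θ j ≠ t) → (n:ℝ) * tan t * C2 < S^2 := by
    rintro ⟨j, hj⟩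
    have hfs : 0 < ∑ i, f i := by
      apply Finset.sum_pos' (fun i _ => hf i)
      exact ⟨j, Finset.mem_univ j, sub_pos.mpr ((perterm ht0 ht3 (hθ j).1 (hθ j).2).2 hj)⟩
    have hC2s : C2 < (n:ℝ) * (sin t * cos t) - sin t*cos t*D - (cos t)^2/3*N := by
      rw [hfsum] at hfs; linarith
    have h1 := mul_lt_mul_of_pos_left hC2s (by positivity : (0:ℝ) < (n:ℝ) * tan t)
    rw [hRHS] at h1
    linarith [hSq]
  constructor
  · rw [hfactor]
    have : 0 ≤ S^2 - (n:ℝ) * tan t * C2 := by linarith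
    positivity
  · constructor
    · intro h
      intro i
      by_contra hne
      have h1 := hstrict ⟨i, hne⟩
      rw [hfactor] at h
      have h2 : 0 < S^2 - (n:ℝ) * tan t * C2 := by linarith
      have h3 : 0 < 4*R^2*(S^2 - (n:ℝ) * tan t * C2) := by positivity
      linarith
    · intro hall
      have hSv : S = (n:ℝ) * sin t := by
        rw [hSdef]
        rw [Finset.sum_congr rfl (fun i _ => by rw [hall i])]
        simp [Finset.sum_const, Finset.card_univ, nsmul_eq_mul]
      have hC2v : C2 = (n:ℝ) * (sin t * cos t) := by
        rw [hC2def]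
        rw [Finset.sum_congr rfl (fun i _ => by rw [hall i])]
        simp [Finset.sum_const, Finset.card_univ, nsmul_eq_mul]
      have hid : ((n:ℝ) * sin t)^2 - (n:ℝ) * tan t * ((n:ℝ)*(sin t * cos t)) = 0 := by
        rw [htan]
        field_simp
        ring
      rw [hfactor, hSv, hC2v]
      linear_combination (4*R^2) * hid
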